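/- Let α, β be real numbers with 0 ≤ α ≤ β and let f : [0,1] → ℝ be continuous. Then the sequence of Bernstein-Stancu polynomials (B_n^{α,β}(f;·))_{n ∈ ℕ} converges uniformly to f on [0,1]; that is, for every ε > 0 there exists N such that for all n ≥ N and all x ∈ [0,1], |B_n^{α,β}(f;x) − f(x)| ≤ ε. -/
import Mathlib


/-- Bernstein basis polynomial `b_{n,k}(x) = (n choose k) x^k (1-x)^(n-k)`. -/
noncomputable def bernsteinBasis (n k : ℕ) (x : ℝ) : ℝ :=
  (n.choose k : ℝ) * x ^ k * (1 - x) ^ (n - k)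

/-- Bernstein-Stancu operator `B_n^{α,β}(f;x)`. -/
noncomputable def bernsteinStancu (n : ℕ) (α β : ℝ) (f : ℝ → ℝ) (x : ℝ) : ℝ :=
  ∑ k ∈ Finset.range (n + 1), bernsteinBasis n k x * f (((k : ℝ) + α) / ((n : ℝ) + β))

lemma bb_eval (n k : ℕ) (x : ℝ) :
    bernsteinBasis n k x = (bernsteinPolynomial ℝ n k).eval x := by
  simp [bernsteinBasis, bernsteinPolynomial]

lemma sum_bb (n : ℕ) (x : ℝ) :
    ∑ k ∈ Finset.range (n + 1), bernsteinBasis n k x = 1 := by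
  have := congrArg (Polynomial.eval x) (bernsteinPolynomial.sum ℝ n)
  simpa [Polynomial.eval_finset_sum, bb_eval] using this

lemma sum_bb_sq (n : ℕ) (x : ℝ) :
    ∑ k ∈ Finset.range (n + 1), ((n : ℝ) * x - k) ^ 2 * bernsteinBasis n k x
      = (n : ℝ) * x * (1 - x) := by
  have := congrArg (Polynomial.eval x) (bernsteinPolynomial.variance ℝ n)
  simpa [Polynomial.eval_finset_sum, bb_eval, nsmul_eq_mul] using this

lemma bb_nonneg (n k : ℕ) {x : ℝ} (hx : x ∈ Set.Icc (0:ℝ) 1) :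
    0 ≤ bernsteinBasis n k x := by
  have h0 := hx.1
  have h1 : (0:ℝ) ≤ 1 - x := by linarith [hx.2]
  exact mul_nonneg (mul_nonneg (Nat.cast_nonneg _) (pow_nonneg h0 _)) (pow_nonneg h1 _)

set_option maxHeartbeats 1000000 in
theorem stancu_uniform_convergence (α β : ℝ) (hα : 0 ≤ α) (hαβ : α ≤ β)
    (f : ℝ → ℝ) (hf : ContinuousOn f (Set.Icc 0 1)) :
    ∀ ε > (0 : ℝ), ∃ N : ℕ, ∀ n : ℕ, N ≤ n → ∀ x ∈ Set.Icc (0 : ℝ) 1,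
      |bernsteinStancu n α β f x - f x| ≤ ε := by
  intro ε hε
  -- bound M for |f|
  obtain ⟨M, hM⟩ : ∃ M : ℝ, ∀ y ∈ Set.Icc (0:ℝ) 1, |f y| ≤ M := by
    obtain ⟨M, hM⟩ := (isCompact_Icc.image_of_continuousOn hf).isBounded.subset_closedBall 0
    exact ⟨M, fun y hy => by
      have := hM (Set.mem_image_of_mem f hy)
      simpa [Metric.mem_closedBall, Real.dist_eq] using this⟩
  have hM0 : 0 ≤ M := le_trans (abs_nonneg _) (hM 0 (by norm_num))
  -- uniform continuity
  have huc : UniformContinuousOn f (Set.Icc 0 1) :=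
    isCompact_Icc.uniformContinuousOn_of_continuous hf
  rw [Metric.uniformContinuousOn_iff] at huc
  obtain ⟨δ, hδ0, hδ⟩ := huc (ε/2) (by linarith)
  -- constant
  set C : ℝ := 2 * M / δ ^ 2 * (2 * β ^ 2 + 1) with hC
  have hC0 : 0 ≤ C := by positivity
  obtain ⟨N0, hN0⟩ := exists_nat_ge (C / (ε/2))
  refine ⟨max 1 N0, fun n hn x hx => ?_⟩
  have hn1 : 1 ≤ n := le_trans (le_max_left _ _) hn
  have hnpos : (0:ℝ) < n := by exact_mod_cast hn1
  have hβ0 : 0 ≤ β := le_trans hα hαβ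
  have hnβ : (0:ℝ) < (n:ℝ) + β := by linarith
  have hx0 := hx.1
  have hx1 := hx.2
  have hn0 : (n:ℝ) ≠ 0 := ne_of_gt hnpos
  have hnβ0 : (n:ℝ) + β ≠ 0 := ne_of_gt hnβ
  -- node in [0,1]
  have hnode : ∀ k ∈ Finset.range (n+1), ((k:ℝ) + α) / ((n:ℝ) + β) ∈ Set.Icc (0:ℝ) 1 := by
    intro k hk
    have hkn : (k:ℝ) ≤ n := by
      exact_mod_cast Nat.lt_succ_iff.mp (Finset.mem_range.mp hk)
    constructor
    · positivity
    · rw [div_le_one hnβ]; linarith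
  -- pointwise estimate
  have key : ∀ k ∈ Finset.range (n+1),
      |f (((k:ℝ) + α) / ((n:ℝ) + β)) - f x| ≤
        ε/2 + 2 * M / δ ^ 2 * (((k:ℝ) + α) / ((n:ℝ) + β) - x) ^ 2 := by
    intro k hk
    set y := ((k:ℝ) + α) / ((n:ℝ) + β) with hy
    have hyI := hnode k hk
    by_cases hclose : |y - x| < δ
    · have := hδ y hyI x hx (by rwa [Real.dist_eq])
      have h2 : 0 ≤ 2 * M / δ ^ 2 * (y - x) ^ 2 := by positivity
      rw [Real.dist_eq] at this
      linarith
    · push_neg at hclose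
      have h1 : |f y - f x| ≤ 2 * M := by
        have := hM y hyI; have := hM x hx
        calc |f y - f x| ≤ |f y| + |f x| := abs_sub _ _
          _ ≤ 2 * M := by linarith
      have h2 : 1 ≤ (y - x) ^ 2 / δ ^ 2 := by
        rw [le_div_iff₀ (by positivity), one_mul]
        calc δ ^ 2 ≤ |y - x| ^ 2 := by
              apply pow_le_pow_left₀ (le_of_lt hδ0) hclose
          _ = (y - x) ^ 2 := sq_abs _
      have : 2 * M ≤ 2 * M / δ ^ 2 * (y - x) ^ 2 := by
        calc 2 * M = 2 * M * 1 := by ring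
          _ ≤ 2 * M * ((y - x) ^ 2 / δ ^ 2) := by
              apply mul_le_mul_of_nonneg_left h2 (by positivity)
          _ = 2 * M / δ ^ 2 * (y - x) ^ 2 := by ring
      linarith
  -- second moment bound
  have moment : ∑ k ∈ Finset.range (n+1),
      bernsteinBasis n k x * (((k:ℝ) + α) / ((n:ℝ) + β) - x) ^ 2
        ≤ (2 * β ^ 2 + 1) / n := by
    have step : ∀ k ∈ Finset.range (n+1),
        bernsteinBasis n k x * (((k:ℝ) + α) / ((n:ℝ) + β) - x) ^ 2
          ≤ bernsteinBasis n k x * (2 * (β / n) ^ 2 + 2 * ((k:ℝ)/n - x) ^ 2) := by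
      intro k hk
      apply mul_le_mul_of_nonneg_left _ (bb_nonneg n k hx)
      have hkn : (k:ℝ) ≤ n := by
        exact_mod_cast Nat.lt_succ_iff.mp (Finset.mem_range.mp hk)
      have hk0 : (0:ℝ) ≤ k := Nat.cast_nonneg k
      set y := ((k:ℝ) + α) / ((n:ℝ) + β)
      have split : (y - x) ^ 2 ≤ 2 * (y - (k:ℝ)/n) ^ 2 + 2 * ((k:ℝ)/n - x) ^ 2 := by
        have : (y - x) = (y - (k:ℝ)/n) + ((k:ℝ)/n - x) := by ring
        rw [this]
        nlinarith [sq_nonneg ((y - (k:ℝ)/n) - ((k:ℝ)/n - x))]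
      have hd : (y - (k:ℝ)/n) ^ 2 ≤ (β / n) ^ 2 := by
        have heq : y - (k:ℝ)/n = ((n:ℝ) * α - (k:ℝ) * β) / ((n:ℝ) * ((n:ℝ) + β)) := by
          show ((k:ℝ) + α) / ((n:ℝ) + β) - (k:ℝ)/n = _
          field_simp
          ring
        have habs : |y - (k:ℝ)/n| ≤ β / n := by
          calc |y - (k:ℝ)/n| = |(n:ℝ) * α - (k:ℝ) * β| / ((n:ℝ) * ((n:ℝ) + β)) := by
                rw [heq, abs_div,
                  abs_of_pos (show (0:ℝ) < (n:ℝ) * ((n:ℝ) + β) by positivity)]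
            _ ≤ ((n:ℝ) * β) / ((n:ℝ) * ((n:ℝ) + β)) := by
                have hnum : |(n:ℝ) * α - (k:ℝ) * β| ≤ (n:ℝ) * β :=
                  abs_le.mpr ⟨by nlinarith, by nlinarith⟩
                gcongr
            _ = β / ((n:ℝ) + β) := by rw [mul_div_mul_left _ _ hn0]
            _ ≤ β / n := by
                apply div_le_div_of_nonneg_left hβ0 hnpos (by linarith)
        calc (y - (k:ℝ)/n) ^ 2 = |y - (k:ℝ)/n| ^ 2 := (sq_abs _).symm
          _ ≤ (β / n) ^ 2 := by
              apply pow_le_pow_left₀ (abs_nonneg _) habs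
      linarith
    calc ∑ k ∈ Finset.range (n+1),
        bernsteinBasis n k x * (((k:ℝ) + α) / ((n:ℝ) + β) - x) ^ 2
        ≤ ∑ k ∈ Finset.range (n+1),
            bernsteinBasis n k x * (2 * (β / n) ^ 2 + 2 * ((k:ℝ)/n - x) ^ 2) :=
          Finset.sum_le_sum step
      _ = 2 * (β / n) ^ 2 * (∑ k ∈ Finset.range (n+1), bernsteinBasis n k x)
          + 2 / (n:ℝ)^2 * ∑ k ∈ Finset.range (n+1),
              ((n:ℝ) * x - k) ^ 2 * bernsteinBasis n k x := by
          rw [Finset.mul_sum, Finset.mul_sum, ← Finset.sum_add_distrib]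
          apply Finset.sum_congr rfl
          intro k hk
          have : ((k:ℝ)/n - x) ^ 2 = ((n:ℝ) * x - k) ^ 2 / (n:ℝ)^2 := by
            rw [eq_div_iff (by positivity)]
            field_simp
            ring
          rw [this]; ring
      _ = 2 * (β / n) ^ 2 + 2 / (n:ℝ)^2 * ((n:ℝ) * x * (1 - x)) := by
          rw [sum_bb, sum_bb_sq]; ring
      _ ≤ 2 * β ^ 2 / n + 1 / n := by
          have hn1' : (1:ℝ) ≤ (n:ℝ) := by exact_mod_cast hn1
          have h1 : 2 * (β / n) ^ 2 ≤ 2 * β ^ 2 / n := by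
            rw [div_pow, mul_div_assoc]
            apply mul_le_mul_of_nonneg_left _ (by norm_num : (0:ℝ) ≤ 2)
            apply div_le_div_of_nonneg_left (sq_nonneg β) hnpos (by nlinarith)
          have h2 : 2 / (n:ℝ)^2 * ((n:ℝ) * x * (1 - x)) ≤ 1 / n := by
            have hx2 : x * (1 - x) ≤ 1/4 := by nlinarith [sq_nonneg (x - 1/2)]
            have e : 2 / (n:ℝ)^2 * ((n:ℝ) * x * (1 - x)) = 2 * (x * (1-x)) / n := by
              rw [div_mul_eq_mul_div, div_eq_div_iff (by positivity) (ne_of_gt hnpos)]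
              ring
            rw [e, div_le_div_iff₀ hnpos hnpos]
            nlinarith
          linarith
      _ = (2 * β ^ 2 + 1) / n := by ring
  -- main estimate
  have main : |bernsteinStancu n α β f x - f x| ≤ ε/2 + C / n := by
    have expand : bernsteinStancu n α β f x - f x
        = ∑ k ∈ Finset.range (n+1),
            bernsteinBasis n k x * (f (((k:ℝ) + α) / ((n:ℝ) + β)) - f x) := by
      simp only [mul_sub, Finset.sum_sub_distrib, bernsteinStancu]
      rw [← Finset.sum_mul, sum_bb, one_mul]
    rw [expand]
    calc |∑ k ∈ Finset.range (n+1),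
            bernsteinBasis n k x * (f (((k:ℝ) + α) / ((n:ℝ) + β)) - f x)|
        ≤ ∑ k ∈ Finset.range (n+1),
            |bernsteinBasis n k x * (f (((k:ℝ) + α) / ((n:ℝ) + β)) - f x)| :=
          Finset.abs_sum_le_sum_abs _ _
      _ ≤ ∑ k ∈ Finset.range (n+1),
            bernsteinBasis n k x * (ε/2 + 2 * M / δ ^ 2 * (((k:ℝ) + α) / ((n:ℝ) + β) - x) ^ 2) := by
          apply Finset.sum_le_sum
          intro k hk
          rw [abs_mul, abs_of_nonneg (bb_nonneg n k hx)]
          exact mul_le_mul_of_nonneg_left (key k hk) (bb_nonneg n k hx)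
      _ = ε/2 * (∑ k ∈ Finset.range (n+1), bernsteinBasis n k x)
          + 2 * M / δ ^ 2 * ∑ k ∈ Finset.range (n+1),
              bernsteinBasis n k x * (((k:ℝ) + α) / ((n:ℝ) + β) - x) ^ 2 := by
          rw [Finset.mul_sum, Finset.mul_sum, ← Finset.sum_add_distrib]
          apply Finset.sum_congr rfl
          intro k hk; ring
      _ ≤ ε/2 + 2 * M / δ ^ 2 * ((2 * β ^ 2 + 1) / n) := by
          rw [sum_bb, mul_one]
          have := mul_le_mul_of_nonneg_left moment (by positivity : (0:ℝ) ≤ 2 * M / δ ^ 2)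
          linarith
      _ = ε/2 + C / n := by rw [hC]; ring
  have tail : C / n ≤ ε/2 := by
    have hNn : (N0:ℝ) ≤ n := by
      exact_mod_cast le_trans (le_max_right 1 N0) hn
    have : C / (ε/2) ≤ n := le_trans hN0 hNn
    rw [div_le_iff₀ hnpos]
    calc C = C / (ε/2) * (ε/2) := by field_simp
      _ ≤ (n:ℝ) * (ε/2) := by
          apply mul_le_mul_of_nonneg_right this (by linarith)
      _ = ε/2 * n := by ring
  linarith
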